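/- Let Gamma be a discrete subgroup of PSL_2(C), C a circle in C-hat, and xi a point of C fixed by a parabolic element gamma of Gamma that does not stabilize C. Then the orbit {gamma^k C : k in Z} is an infinite family of pairwise tangent circles all tangent at xi (after conjugating xi to infinity, they are distinct parallel lines). In particular, if Gamma(C) contains no infinite bouquet of tangent circles glued at xi, then every parabolic element of Gamma fixing xi stabilizes C. -/

import Mathlib

open Matrix OnePoint

noncomputable section

/-- The Möbius action of `PSL₂(ℂ)` (realized by determinant-one matrices) on the
extended complex plane `ℂ̂ = ℂ ∪ {∞}`. -/
def mob (g : Matrix (Fin 2) (Fin 2) ℂ) (w : OnePoint ℂ) : OnePoint ℂ :=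
  match w with
  | OnePoint.infty => if g 1 0 = 0 then ∞ else ((g 0 0 / g 1 0 : ℂ) : OnePoint ℂ)
  | OnePoint.some z => if g 1 0 * z + g 1 1 = 0 then ∞
      else (((g 0 0 * z + g 0 1) / (g 1 0 * z + g 1 1) : ℂ) : OnePoint ℂ)

/-- The circle in `ℂ̂` with center `c` and radius `r`. -/
def circleSet (c : ℂ) (r : ℝ) : Set (OnePoint ℂ) :=
  {w | ∃ z : ℂ, w = (z : OnePoint ℂ) ∧ ‖z - c‖ = r}

/-- The line in `ℂ̂` through `v` with direction `u`, together with `∞`. -/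
def lineSet (v u : ℂ) : Set (OnePoint ℂ) :=
  insert ∞ {w | ∃ t : ℝ, w = ((v + (t : ℂ) * u : ℂ) : OnePoint ℂ)}

/-- `g` is a generalized circle (a Euclidean circle, or a line together with `∞`). -/
def IsGenCircle (C : Set (OnePoint ℂ)) : Prop :=
  (∃ c r, 0 < r ∧ C = circleSet c r) ∨ (∃ v u, u ≠ 0 ∧ C = lineSet v u)

/-- `g` is parabolic iff it has a unique fixed point in `ℂ̂`. -/
def IsParabolic (g : Matrix.SpecialLinearGroup (Fin 2) ℂ) : Prop :=
  ∃! w : OnePoint ℂ, mob (↑g) w = w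

lemma mob_infty (g : Matrix (Fin 2) (Fin 2) ℂ) :
    mob g ∞ = if g 1 0 = 0 then ∞ else ((g 0 0 / g 1 0 : ℂ) : OnePoint ℂ) := rfl

lemma mob_coe (g : Matrix (Fin 2) (Fin 2) ℂ) (z : ℂ) :
    mob g (z : OnePoint ℂ) = if g 1 0 * z + g 1 1 = 0 then ∞
      else (((g 0 0 * z + g 0 1) / (g 1 0 * z + g 1 1) : ℂ) : OnePoint ℂ) := rfl

lemma mob_mul' (g h : Matrix (Fin 2) (Fin 2) ℂ) (hg : g.det = 1) (hh : h.det = 1)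
    (w : OnePoint ℂ) : mob (g * h) w = mob g (mob h w) := by
  rw [Matrix.det_fin_two] at hg hh
  have e : ∀ i j, (g * h) i j = g i 0 * h 0 j + g i 1 * h 1 j := by
    intro i j; simp [Matrix.mul_apply, Fin.sum_univ_two]
  cases w using OnePoint.rec with
  | infty =>
    by_cases hr : h 1 0 = 0
    · have hp : h 0 0 ≠ 0 := by
        intro hp0
        apply one_ne_zero (α := ℂ)
        linear_combination -hh - h 0 1 * hr + h 1 1 * hp0
      rw [mob_infty h, if_pos hr, mob_infty g, mob_infty (g * h)]
      by_cases hc : g 1 0 = 0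
      · rw [if_pos (by simp [e, hr, hc]), if_pos hc]
      · rw [if_neg (by rw [e, hr]; simpa using mul_ne_zero hc hp), if_neg hc,
          OnePoint.coe_eq_coe]
        rw [div_eq_div_iff (by rw [e, hr]; simpa using mul_ne_zero hc hp) hc, e, e, hr]
        ring
    · rw [mob_infty h, if_neg hr, mob_coe, mob_infty (g * h)]
      by_cases hd : g 1 0 * (h 0 0 / h 1 0) + g 1 1 = 0
      · rw [if_pos hd, if_pos]
        rw [e]
        field_simp at hd
        linear_combination hd
      · have hD : g 1 0 * h 0 0 + g 1 1 * h 1 0 ≠ 0 := by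
          intro h'; apply hd; field_simp; linear_combination h'
        rw [if_neg hd, if_neg (by rw [e]; exact hD), OnePoint.coe_eq_coe]
        rw [e, e, div_eq_div_iff hD hd]
        field_simp
  | coe z =>
    by_cases hr : h 1 0 * z + h 1 1 = 0
    · have hp : h 0 0 * z + h 0 1 ≠ 0 := by
        intro hp0
        apply one_ne_zero (α := ℂ)
        linear_combination -hh + h 0 0 * hr - h 1 0 * hp0
      rw [mob_coe h, if_pos hr, mob_infty g, mob_coe (g * h)]
      by_cases hc : g 1 0 = 0
      · rw [if_pos, if_pos hc]
        rw [e, e]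
        linear_combination (h 0 0 * z + h 0 1) * hc + g 1 1 * hr
      · have hne : (g * h) 1 0 * z + (g * h) 1 1 ≠ 0 := by
          rw [e, e]
          intro h'
          have h2 : g 1 0 * (h 0 0 * z + h 0 1) = 0 := by linear_combination h' - g 1 1 * hr
          rcases mul_eq_zero.1 h2 with h3 | h3
          · exact hc h3
          · exact hp h3
        rw [if_neg hne, if_neg hc, OnePoint.coe_eq_coe]
        rw [e, e] at hne ⊢
        rw [e, e, div_eq_div_iff hne hc]
        linear_combination (g 0 1 * g 1 0 - g 0 0 * g 1 1) * hr
    · rw [mob_coe h, if_neg hr, mob_coe g, mob_coe (g * h)]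
      by_cases hN : (g * h) 1 0 * z + (g * h) 1 1 = 0
      · rw [if_pos hN, if_pos]
        rw [e, e] at hN
        rw [mul_div_assoc', div_add' _ _ _ hr, div_eq_zero_iff]; left
        linear_combination hN
      · rw [e, e] at hN
        have hd2 : g 1 0 * ((h 0 0 * z + h 0 1) / (h 1 0 * z + h 1 1)) + g 1 1 ≠ 0 := by
          intro h'; apply hN
          rw [mul_div_assoc', div_add' _ _ _ hr, div_eq_zero_iff] at h'
          rcases h' with h' | h'
          · linear_combination h'
          · exact absurd h' hr
        rw [if_neg (by rw [e, e]; exact hN), if_neg hd2, OnePoint.coe_eq_coe]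
        rw [e, e, e, e, div_eq_div_iff hN hd2]
        field_simp [hr]
        ring


abbrev SL2 := Matrix.SpecialLinearGroup (Fin 2) ℂ

lemma mob_one (w : OnePoint ℂ) : mob (1 : Matrix (Fin 2) (Fin 2) ℂ) w = w := by
  cases w using OnePoint.rec with
  | infty => simp [mob_infty]
  | coe z => simp [mob_coe]

lemma mob_mul (g h : SL2) (w : OnePoint ℂ) :
    mob (↑(g * h)) w = mob (↑g) (mob (↑h) w) := by
  rw [Matrix.SpecialLinearGroup.coe_mul]
  exact mob_mul' _ _ g.2 h.2 w

noncomputable def mobEquiv (g : SL2) : Equiv.Perm (OnePoint ℂ) where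
  toFun := mob ↑g
  invFun := mob ↑(g⁻¹)
  left_inv w := by rw [← mob_mul, inv_mul_cancel, Matrix.SpecialLinearGroup.coe_one, mob_one]
  right_inv w := by rw [← mob_mul, mul_inv_cancel, Matrix.SpecialLinearGroup.coe_one, mob_one]

noncomputable def mobHom : SL2 →* Equiv.Perm (OnePoint ℂ) where
  toFun := mobEquiv
  map_one' := by ext w; simp [mobEquiv, Matrix.SpecialLinearGroup.coe_one, mob_one]
  map_mul' g h := by ext w; exact mob_mul g h w

lemma mobHom_apply (g : SL2) (w : OnePoint ℂ) : mobHom g w = mob (↑g) w := rfl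

lemma mob_zpow_image (g : SL2) (k : ℤ) (S : Set (OnePoint ℂ)) :
    mob (↑(g ^ k)) '' S = (mobHom g ^ k : Equiv.Perm (OnePoint ℂ)) '' S := by
  have : (mob (↑(g ^ k)) : OnePoint ℂ → OnePoint ℂ)
      = (mobHom (g ^ k) : Equiv.Perm (OnePoint ℂ)) := rfl
  rw [this, map_zpow]

lemma mob_injective (g : SL2) : Function.Injective (mob (↑g)) :=
  (mobEquiv g).injective

def Tr (t : ℂ) : OnePoint ℂ → OnePoint ℂ
  | OnePoint.infty => ∞
  | OnePoint.some z => ((z + t : ℂ) : OnePoint ℂ)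

lemma Tr_infty (t : ℂ) : Tr t ∞ = ∞ := rfl
lemma Tr_coe (t z : ℂ) : Tr t (z : OnePoint ℂ) = ((z + t : ℂ) : OnePoint ℂ) := rfl

lemma Tr_zero (w : OnePoint ℂ) : Tr 0 w = w := by
  cases w using OnePoint.rec with
  | infty => rfl
  | coe z => simp [Tr_coe]

lemma Tr_Tr (s t : ℂ) (w : OnePoint ℂ) : Tr t (Tr s w) = Tr (s + t) w := by
  cases w using OnePoint.rec with
  | infty => rfl
  | coe z => simp [Tr_coe, add_assoc]

/-- A parabolic element fixing `∞` acts as a translation by some `t ≠ 0`. -/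
lemma parabolic_fix_infty (γ : SL2) (hp : IsParabolic γ) (hf : mob (↑γ) ∞ = ∞) :
    ∃ t : ℂ, t ≠ 0 ∧ ∀ w, mob (↑γ) w = Tr t w := by
  obtain ⟨w₀, hw₀, huniq⟩ := hp
  have hξ : w₀ = ∞ := (huniq ∞ hf).symm
  subst hξ
  have hc : (γ : Matrix (Fin 2) (Fin 2) ℂ) 1 0 = 0 := by
    by_contra hc
    rw [mob_infty, if_neg hc] at hf
    exact (OnePoint.coe_ne_infty _) hf
  have hdet : (γ : Matrix (Fin 2) (Fin 2) ℂ) 0 0 * (γ : Matrix (Fin 2) (Fin 2) ℂ) 1 1 = 1 := by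
    have := γ.2
    rw [Matrix.det_fin_two] at this
    rw [hc] at this
    linear_combination this
  set a := (γ : Matrix (Fin 2) (Fin 2) ℂ) 0 0
  set b := (γ : Matrix (Fin 2) (Fin 2) ℂ) 0 1
  set d := (γ : Matrix (Fin 2) (Fin 2) ℂ) 1 1
  have hd : d ≠ 0 := by intro h; rw [h, mul_zero] at hdet; exact one_ne_zero hdet.symm
  have ha : a ≠ 0 := by intro h; rw [h, zero_mul] at hdet; exact one_ne_zero hdet.symm
  have hcoe : ∀ z : ℂ, mob (↑γ) (z : OnePoint ℂ) = (((a * z + b) / d : ℂ) : OnePoint ℂ) := by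
    intro z
    rw [mob_coe, if_neg (by rw [hc]; simpa using hd)]
    rw [hc, zero_mul, zero_add]
  -- a = d
  have had : a = d := by
    by_contra had
    have hfix : mob (↑γ) ((b / (d - a) : ℂ) : OnePoint ℂ) = ((b / (d - a) : ℂ) : OnePoint ℂ) := by
      rw [hcoe, OnePoint.coe_eq_coe]
      have hda : d - a ≠ 0 := sub_ne_zero.2 (fun h => had h.symm)
      field_simp
      ring
    exact (OnePoint.coe_ne_infty _) (huniq _ hfix)
  refine ⟨b / d, ?_, ?_⟩
  · intro hb0
    have h0fix : mob (↑γ) ((0 : ℂ) : OnePoint ℂ) = ((0 : ℂ) : OnePoint ℂ) := by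
      rw [hcoe, OnePoint.coe_eq_coe]
      rw [mul_zero, zero_add, div_eq_iff hd]
      rw [div_eq_iff hd] at hb0
      simpa using hb0
    exact (OnePoint.coe_ne_infty _) (huniq _ h0fix)
  · intro w
    cases w using OnePoint.rec with
    | infty => rw [hf]; rfl
    | coe z =>
      rw [hcoe, Tr_coe, OnePoint.coe_eq_coe, had]
      field_simp

/-- Powers of a translation-acting element act as translations. -/
lemma mob_zpow_Tr (γ : SL2) (t : ℂ) (hT : ∀ w, mob (↑γ) w = Tr t w) (k : ℤ) :
    ∀ w, mob (↑(γ ^ k)) w = Tr (k * t) w := by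
  have hinv : ∀ w, mob (↑(γ⁻¹)) w = Tr (-t) w := by
    intro w
    apply mob_injective γ
    rw [← mob_mul, mul_inv_cancel, Matrix.SpecialLinearGroup.coe_one, mob_one, hT, Tr_Tr]
    simp
    cases w using OnePoint.rec with
    | infty => rfl
    | coe z => simp [Tr_coe]
  induction k using Int.induction_on with
  | zero =>
    intro w
    rw [zpow_zero, Matrix.SpecialLinearGroup.coe_one, mob_one]
    norm_num [Tr_zero]
  | succ n ih =>
    intro w
    have : γ ^ ((n : ℤ) + 1) = γ ^ (n : ℤ) * γ := by rw [_root_.zpow_add, zpow_one]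
    rw [this, mob_mul, hT, ih, Tr_Tr]
    push_cast
    ring_nf
  | pred n ih =>
    intro w
    have : γ ^ (-(n : ℤ) - 1) = γ ^ (-(n : ℤ)) * γ⁻¹ := by rw [_root_.zpow_sub, zpow_one]
    rw [this, mob_mul, hinv, ih, Tr_Tr]
    push_cast
    ring_nf

lemma infty_mem_lineSet (v u : ℂ) : ∞ ∈ lineSet v u := Set.mem_insert _ _

lemma coe_mem_lineSet (v u z : ℂ) :
    (z : OnePoint ℂ) ∈ lineSet v u ↔ ∃ t : ℝ, z = v + (t : ℂ) * u := by
  constructor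
  · rintro (h | ⟨t, ht⟩)
    · exact absurd h (OnePoint.coe_ne_infty z)
    · exact ⟨t, OnePoint.coe_eq_coe.1 ht⟩
  · rintro ⟨t, ht⟩
    exact Set.mem_insert_iff.2 (Or.inr ⟨t, by rw [ht]⟩)

lemma Tr_image_line (t v u : ℂ) : Tr t '' lineSet v u = lineSet (v + t) u := by
  ext w
  constructor
  · rintro ⟨x, hx, rfl⟩
    cases x using OnePoint.rec with
    | infty => exact infty_mem_lineSet _ _
    | coe z =>
      obtain ⟨s, hs⟩ := (coe_mem_lineSet v u z).1 hx
      rw [Tr_coe]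
      exact (coe_mem_lineSet _ _ _).2 ⟨s, by rw [hs]; ring⟩
  · intro hw
    cases w using OnePoint.rec with
    | infty => exact ⟨∞, infty_mem_lineSet _ _, rfl⟩
    | coe z =>
      obtain ⟨s, hs⟩ := (coe_mem_lineSet _ _ _).1 hw
      refine ⟨((v + (s : ℂ) * u : ℂ) : OnePoint ℂ), (coe_mem_lineSet _ _ _).2 ⟨s, rfl⟩, ?_⟩
      rw [Tr_coe, OnePoint.coe_eq_coe, hs]; ring

lemma lineSet_shift (v u : ℂ) (s : ℝ) : lineSet (v + (s : ℂ) * u) u = lineSet v u := by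
  ext w
  cases w using OnePoint.rec with
  | infty => simp [infty_mem_lineSet]
  | coe z =>
    rw [coe_mem_lineSet, coe_mem_lineSet]
    constructor
    · rintro ⟨t, ht⟩; exact ⟨s + t, by rw [ht]; push_cast; ring⟩
    · rintro ⟨t, ht⟩; exact ⟨t - s, by rw [ht]; push_cast; ring⟩

lemma lineSet_inter (v u t : ℂ) (ht : ¬∃ s : ℝ, (s : ℂ) * u = t) :
    lineSet (v + t) u ∩ lineSet v u = {∞} := by
  ext w
  constructor
  · rintro ⟨h1, h2⟩
    cases w using OnePoint.rec with
    | infty => rfl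
    | coe z =>
      obtain ⟨s1, hs1⟩ := (coe_mem_lineSet _ _ _).1 h1
      obtain ⟨s2, hs2⟩ := (coe_mem_lineSet _ _ _).1 h2
      exact absurd ⟨s2 - s1, by push_cast; linear_combination hs1 - hs2⟩ ht
  · rintro rfl
    exact ⟨infty_mem_lineSet _ _, infty_mem_lineSet _ _⟩

lemma coe_notMem_lineSet_shift (v u t : ℂ) (ht : ¬∃ s : ℝ, (s : ℂ) * u = t) :
    (v : OnePoint ℂ) ∉ lineSet (v + t) u := by
  intro h
  obtain ⟨s, hs⟩ := (coe_mem_lineSet _ _ _).1 h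
  exact ht ⟨-s, by push_cast; linear_combination hs⟩

def sig (z₀ : ℂ) : SL2 :=
  ⟨!![0,-1;1,-z₀], by simp [Matrix.det_fin_two_of]⟩

lemma sig_entries (z₀ : ℂ) :
    (↑(sig z₀) : Matrix (Fin 2) (Fin 2) ℂ) 0 0 = 0 ∧
    (↑(sig z₀) : Matrix (Fin 2) (Fin 2) ℂ) 0 1 = -1 ∧
    (↑(sig z₀) : Matrix (Fin 2) (Fin 2) ℂ) 1 0 = 1 ∧
    (↑(sig z₀) : Matrix (Fin 2) (Fin 2) ℂ) 1 1 = -z₀ := by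
  refine ⟨?_, ?_, ?_, ?_⟩ <;> simp [sig]

lemma mob_sig_infty (z₀ : ℂ) : mob (↑(sig z₀)) ∞ = ((0 : ℂ) : OnePoint ℂ) := by
  obtain ⟨h1, h2, h3, h4⟩ := sig_entries z₀
  rw [mob_infty, h3, h1, if_neg one_ne_zero]
  norm_num

lemma mob_sig_self (z₀ : ℂ) : mob (↑(sig z₀)) ((z₀ : ℂ) : OnePoint ℂ) = ∞ := by
  obtain ⟨h1, h2, h3, h4⟩ := sig_entries z₀
  rw [mob_coe, h3, h4, if_pos (by ring)]

lemma mob_sig_coe (z₀ z : ℂ) (hz : z ≠ z₀) :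
    mob (↑(sig z₀)) ((z : ℂ) : OnePoint ℂ) = ((-1 / (z - z₀) : ℂ) : OnePoint ℂ) := by
  obtain ⟨h1, h2, h3, h4⟩ := sig_entries z₀
  rw [mob_coe, h1, h2, h3, h4, if_neg (by rw [one_mul]; exact sub_ne_zero.2 hz)]
  rw [OnePoint.coe_eq_coe]
  rw [one_mul, zero_mul, zero_add]
  ring_nf

lemma sig_image_line (z₀ v u : ℂ) (hu : u ≠ 0) (s₀ : ℝ) (hz₀ : z₀ = v + (s₀ : ℂ) * u) :
    mob (↑(sig z₀)) '' lineSet v u = lineSet 0 u⁻¹ := by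
  have hL : lineSet v u = lineSet z₀ u := by
    rw [hz₀, lineSet_shift]
  rw [hL]
  ext x
  constructor
  · rintro ⟨w, hw, rfl⟩
    cases w using OnePoint.rec with
    | infty =>
      rw [mob_sig_infty]
      exact (coe_mem_lineSet _ _ _).2 ⟨0, by simp⟩
    | coe z =>
      obtain ⟨s, hs⟩ := (coe_mem_lineSet _ _ _).1 hw
      by_cases hsz : (s : ℂ) = 0
      · have : z = z₀ := by rw [hs, hsz]; ring
        rw [this, mob_sig_self]
        exact infty_mem_lineSet _ _
      · have hzz : z ≠ z₀ := by
          rw [hs]; intro h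
          have h0 : (s : ℂ) * u = 0 := by linear_combination h
          rcases mul_eq_zero.1 h0 with h' | h'
          · exact hsz h'
          · exact hu h'
        rw [mob_sig_coe _ _ hzz]
        have hsr : s ≠ 0 := by exact_mod_cast hsz
        refine (coe_mem_lineSet _ _ _).2 ⟨-1/s, ?_⟩
        rw [hs]
        push_cast
        field_simp
        ring
  · intro hx
    cases x using OnePoint.rec with
    | infty =>
      exact ⟨((z₀ : ℂ) : OnePoint ℂ), (coe_mem_lineSet _ _ _).2 ⟨0, by simp⟩, mob_sig_self z₀⟩
    | coe w =>
      obtain ⟨s, hs⟩ := (coe_mem_lineSet _ _ _).1 hx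
      by_cases hsz : (s : ℂ) = 0
      · refine ⟨∞, infty_mem_lineSet _ _, ?_⟩
        rw [mob_sig_infty, OnePoint.coe_eq_coe, hs, hsz]
        ring
      · have hsr : s ≠ 0 := by exact_mod_cast hsz
        refine ⟨((z₀ + ((-1/s : ℝ)) * u : ℂ) : OnePoint ℂ),
          (coe_mem_lineSet _ _ _).2 ⟨-1/s, rfl⟩, ?_⟩
        have hne : z₀ + ((-1/s : ℝ) : ℂ) * u ≠ z₀ := by
          intro h
          have : ((-1/s : ℝ) : ℂ) * u = 0 := by linear_combination h
          rcases mul_eq_zero.1 this with h' | h'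
          · rw [Complex.ofReal_eq_zero] at h'
            rcases div_eq_zero_iff.1 h' with h' | h'
            · norm_num at h'
            · exact hsr h'
          · exact hu h'
        rw [mob_sig_coe _ _ hne, OnePoint.coe_eq_coe, hs]
        have e2 : z₀ + ((-1/s : ℝ) : ℂ) * u - z₀ = -((1/(s:ℂ)) * u) := by push_cast; ring
        rw [e2]
        rw [zero_add]
        field_simp

lemma key_line (d : ℂ) (hd : d ≠ 0) (t : ℝ) :
    d * (-(starRingEnd ℂ d) / (2 * (Complex.normSq d : ℂ))
        + (t : ℂ) * (Complex.I * starRingEnd ℂ d))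
      = (((-1/2 : ℝ)) : ℂ) + ((t * Complex.normSq d : ℝ) : ℂ) * Complex.I := by
  have hm : d * starRingEnd ℂ d = (Complex.normSq d : ℂ) := Complex.mul_conj d
  have h0 : (Complex.normSq d : ℂ) ≠ 0 := by
    simpa [Complex.ofReal_eq_zero, Complex.normSq_eq_zero] using hd
  calc d * (-(starRingEnd ℂ d) / (2 * (Complex.normSq d : ℂ))
        + (t : ℂ) * (Complex.I * starRingEnd ℂ d))
      = (d * starRingEnd ℂ d) * (-(1:ℂ) / (2 * (Complex.normSq d : ℂ)))
        + (t : ℂ) * Complex.I * (d * starRingEnd ℂ d) := by ring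
    _ = (Complex.normSq d : ℂ) * (-(1:ℂ) / (2 * (Complex.normSq d : ℂ)))
        + (t : ℂ) * Complex.I * (Complex.normSq d : ℂ) := by rw [hm]
    _ = (((-1/2 : ℝ)) : ℂ) + ((t * Complex.normSq d : ℝ) : ℂ) * Complex.I := by
        push_cast
        field_simp

lemma line_mem_iff (d : ℂ) (hd : d ≠ 0) (w : ℂ) :
    (∃ t : ℝ, w = -(starRingEnd ℂ d) / (2 * (Complex.normSq d : ℂ))
        + (t : ℂ) * (Complex.I * starRingEnd ℂ d))
      ↔ 2 * (d * w).re = -1 := by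
  have hN0 : Complex.normSq d ≠ 0 := by simpa [Complex.normSq_eq_zero] using hd
  constructor
  · rintro ⟨t, rfl⟩
    rw [mul_add, ← mul_assoc, ← mul_assoc]
    have := key_line d hd t
    rw [mul_add, ← mul_assoc, ← mul_assoc] at this
    rw [this]
    simp [Complex.add_re, Complex.ofReal_re, Complex.mul_re, Complex.I_re,
      Complex.I_im, Complex.ofReal_im]
    norm_num
  · intro hre
    rw [Complex.mul_re] at hre
    refine ⟨(d * w).im / Complex.normSq d, ?_⟩
    apply mul_left_cancel₀ hd
    rw [key_line d hd]
    have ht : (d * w).im / Complex.normSq d * Complex.normSq d = (d * w).im :=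
      div_mul_cancel₀ _ hN0
    rw [ht]
    apply Complex.ext
    · simp [Complex.add_re, Complex.ofReal_re, Complex.mul_re, Complex.I_re,
        Complex.I_im, Complex.ofReal_im]
      linarith
    · simp [Complex.add_im, Complex.ofReal_im, Complex.mul_im, Complex.I_re,
        Complex.I_im, Complex.ofReal_re]

/-- Core real computation: for `p * w = -1`, `|d| = r`, being on the circle
`|p - d| = r` (as normSq) is equivalent to `2 (d w).re = -1`. -/
lemma circle_char (p w d : ℂ) (r : ℝ) (hp : p ≠ 0) (hw : p * w = -1)
    (hNr : Complex.normSq d = r ^ 2) :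
    Complex.normSq (p - d) = r ^ 2 ↔ 2 * (d * w).re = -1 := by
  have hw0 : w ≠ 0 := by intro h; rw [h, mul_zero] at hw; exact (by norm_num : (0:ℂ) ≠ -1) hw
  have h1 : p.re * w.re - p.im * w.im = -1 := by
    have := congrArg Complex.re hw
    simpa [Complex.mul_re] using this
  have h2 : p.re * w.im + p.im * w.re = 0 := by
    have := congrArg Complex.im hw
    simpa [Complex.mul_im] using this
  have hQ : (p.re ^ 2 + p.im ^ 2) * (w.re ^ 2 + w.im ^ 2) = 1 := by
    have := congrArg Complex.normSq hw
    rw [Complex.normSq_mul] at this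
    simp [Complex.normSq_apply] at this
    nlinarith [this]
  have hS0 : p.re ^ 2 + p.im ^ 2 ≠ 0 := by
    have := Complex.normSq_pos.2 hp
    rw [Complex.normSq_apply] at this
    nlinarith
  have hQ0 : w.re ^ 2 + w.im ^ 2 ≠ 0 := by
    have := Complex.normSq_pos.2 hw0
    rw [Complex.normSq_apply] at this
    nlinarith
  have g1 : w.re * (p.re ^ 2 + p.im ^ 2) = -p.re := by linear_combination p.re * h1 + p.im * h2
  have g2 : w.im * (p.re ^ 2 + p.im ^ 2) = p.im := by linear_combination p.re * h2 - p.im * h1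
  have q1 : p.re * (w.re ^ 2 + w.im ^ 2) = -w.re := by linear_combination w.re * h1 + w.im * h2
  have q2 : p.im * (w.re ^ 2 + w.im ^ 2) = w.im := by linear_combination w.re * h2 - w.im * h1
  rw [Complex.normSq_apply] at hNr ⊢
  simp only [Complex.sub_re, Complex.sub_im, Complex.mul_re]
  constructor
  · intro hcirc
    have hprod : (2 * (d.re * w.re - d.im * w.im) + 1) * (p.re ^ 2 + p.im ^ 2) = 0 := by
      linear_combination 2 * d.re * g1 - 2 * d.im * g2 + hcirc - hNr
    rcases mul_eq_zero.1 hprod with h | h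
    · linarith
    · exact absurd h hS0
  · intro hre
    have hprod : ((p.re - d.re) * (p.re - d.re) + (p.im - d.im) * (p.im - d.im) - r ^ 2)
        * (w.re ^ 2 + w.im ^ 2) = 0 := by
      linear_combination hQ - 2 * d.re * q1 - 2 * d.im * q2
        + (w.re ^ 2 + w.im ^ 2) * hNr + hre
    rcases mul_eq_zero.1 hprod with h | h
    · linarith
    · exact absurd h hQ0

lemma sig_image_circle (z₀ c : ℂ) (r : ℝ) (hr : 0 < r) (habs : ‖z₀ - c‖ = r) :
    mob (↑(sig z₀)) '' circleSet c r
      = lineSet (-(starRingEnd ℂ (c - z₀)) / (2 * (Complex.normSq (c - z₀) : ℂ)))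
          (Complex.I * starRingEnd ℂ (c - z₀)) := by
  set d := c - z₀ with hdd
  have habs' : ‖d‖ = r := by rw [hdd, ← habs]; exact norm_sub_rev c z₀
  have hd : d ≠ 0 := by
    intro h
    rw [h] at habs'
    simp at habs'
    exact hr.ne habs'
  have hNr : Complex.normSq d = r ^ 2 := by rw [← Complex.sq_norm, habs']
  ext x
  constructor
  · rintro ⟨wz, hwz, rfl⟩
    obtain ⟨z, rfl, hzc⟩ := hwz
    by_cases hz : z = z₀
    · rw [hz, mob_sig_self]
      exact infty_mem_lineSet _ _
    · rw [mob_sig_coe _ _ hz]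
      apply (coe_mem_lineSet _ _ _).2
      have hp : z - z₀ ≠ 0 := sub_ne_zero.2 hz
      have hw : (z - z₀) * (-1 / (z - z₀)) = -1 := by field_simp
      have hzc2 : Complex.normSq ((z - z₀) - d) = r ^ 2 := by
        have e : (z - z₀) - d = z - c := by rw [hdd]; ring
        rw [e, ← Complex.sq_norm, hzc]
      have hre := (circle_char (z - z₀) (-1 / (z - z₀)) d r hp hw hNr).1 hzc2
      obtain ⟨t, ht⟩ := (line_mem_iff d hd _).2 hre
      exact ⟨t, ht⟩
  · intro hx
    cases x using OnePoint.rec with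
    | infty =>
      exact ⟨((z₀ : ℂ) : OnePoint ℂ), ⟨z₀, rfl, habs⟩, mob_sig_self z₀⟩
    | coe w =>
      obtain ⟨t, ht⟩ := (coe_mem_lineSet _ _ _).1 hx
      have hre := (line_mem_iff d hd w).1 ⟨t, ht⟩
      have hw0 : w ≠ 0 := by
        intro h
        rw [h, mul_zero] at hre
        simp at hre
      set z := z₀ - 1 / w with hz
      have hp : z - z₀ ≠ 0 := by
        rw [hz]
        intro h
        have : 1 / w = 0 := by linear_combination -h
        rw [div_eq_zero_iff] at this
        rcases this with h' | h'
        · exact one_ne_zero h'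
        · exact hw0 h'
      have hzne : z ≠ z₀ := by intro h; exact hp (by rw [h]; ring)
      have hw : (z - z₀) * w = -1 := by rw [hz]; field_simp; ring
      have hcirc := (circle_char (z - z₀) w d r hp hw hNr).2 hre
      have habs2 : ‖z - c‖ = r := by
        have e : (z - z₀) - d = z - c := by rw [hdd]; ring
        rw [e] at hcirc
        have h1 : ‖z - c‖ ^ 2 = r ^ 2 := by rw [Complex.sq_norm, hcirc]
        have h2 : 0 ≤ ‖z - c‖ := norm_nonneg _
        have h3 : (‖z - c‖ - r) * (‖z - c‖ + r) = 0 := by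
          linear_combination h1
        rcases mul_eq_zero.1 h3 with h | h
        · linarith
        · linarith
      refine ⟨((z : ℂ) : OnePoint ℂ), ⟨z, rfl, habs2⟩, ?_⟩
      rw [mob_sig_coe _ _ hzne, OnePoint.coe_eq_coe, hz]
      have : z₀ - 1 / w - z₀ = -(1 / w) := by ring
      rw [this]
      field_simp

lemma exists_sigma (C : Set (OnePoint ℂ)) (hC : IsGenCircle C) (ξ : OnePoint ℂ) (hξC : ξ ∈ C) :
    ∃ σ : SL2, mob (↑σ) ξ = ∞ ∧ ∃ v u : ℂ, u ≠ 0 ∧ mob (↑σ) '' C = lineSet v u := by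
  have hid : mob ((1 : SL2) : Matrix (Fin 2) (Fin 2) ℂ) = id := by
    funext w
    rw [Matrix.SpecialLinearGroup.coe_one, mob_one, id]
  cases ξ using OnePoint.rec with
  | infty =>
    refine ⟨1, by rw [hid, id], ?_⟩
    rcases hC with ⟨c, r, hr, rfl⟩ | ⟨v, u, hu, rfl⟩
    · obtain ⟨z, hz, _⟩ := hξC
      exact absurd hz ((OnePoint.infty_ne_coe z))
    · exact ⟨v, u, hu, by rw [hid, Set.image_id]⟩
  | coe z₀ =>
    refine ⟨sig z₀, mob_sig_self z₀, ?_⟩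
    rcases hC with ⟨c, r, hr, rfl⟩ | ⟨v, u, hu, rfl⟩
    · obtain ⟨z, hz, hzc⟩ := hξC
      have hzz : z = z₀ := (OnePoint.coe_eq_coe.1 hz).symm
      subst hzz
      have hd : c - z ≠ 0 := by
        intro h
        have : z - c = 0 := by linear_combination -h
        rw [this] at hzc
        simp at hzc
        exact hr.ne hzc
      refine ⟨_, _, mul_ne_zero Complex.I_ne_zero ?_, sig_image_circle z c r hr hzc⟩
      rw [ne_eq, map_eq_zero]
      exact hd
    · obtain ⟨s₀, hs₀⟩ := (coe_mem_lineSet v u z₀).1 hξC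
      exact ⟨0, u⁻¹, inv_ne_zero hu, sig_image_line z₀ v u hu s₀ hs₀⟩

lemma image_mul (a b : SL2) (S : Set (OnePoint ℂ)) :
    mob (↑(a * b)) '' S = mob (↑a) '' (mob (↑b) '' S) := by
  rw [← Set.image_comp]
  exact Set.image_congr' (fun w => mob_mul a b w)

/-- Let `C` be a circle, `ξ ∈ C`, and `γ` a parabolic element fixing `ξ` that does
not stabilize `C`.  Then the orbit `{γ^k C : k ∈ ℤ}` is an infinite family of
distinct circles, pairwise tangent at `ξ` (any two distinct members meet exactly
in `{ξ}`).  In particular, if the `Γ`-orbit of `C` contains no infinite bouquet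
of circles glued (pairwise tangent) at `ξ`, then every parabolic element of `Γ`
fixing `ξ` stabilizes `C`. -/
theorem parabolic_orbit_tangent_bouquet (C : Set (OnePoint ℂ)) (hC : IsGenCircle C)
    (ξ : OnePoint ℂ) (hξC : ξ ∈ C) :
    (∀ γ : Matrix.SpecialLinearGroup (Fin 2) ℂ, IsParabolic γ → mob (↑γ) ξ = ξ →
      mob (↑γ) '' C ≠ C →
      Function.Injective (fun k : ℤ => mob (↑(γ ^ k)) '' C) ∧
      ∀ k l : ℤ, k ≠ l →
        (mob (↑(γ ^ k)) '' C) ∩ (mob (↑(γ ^ l)) '' C) = {ξ}) ∧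
    (∀ Γ : Subgroup (Matrix.SpecialLinearGroup (Fin 2) ℂ),
      (¬ ∃ f : ℤ → Set (OnePoint ℂ), Function.Injective f ∧
        (∀ k, ∃ γ ∈ Γ, f k = mob (↑γ) '' C) ∧
        (∀ k l, k ≠ l → f k ∩ f l = {ξ})) →
      ∀ γ ∈ Γ, IsParabolic γ → mob (↑γ) ξ = ξ → mob (↑γ) '' C = C) := by
  obtain ⟨σ, hσξ, v, u, hu, hCimg⟩ := exists_sigma C hC ξ hξC
  have hσinv : mob (↑σ⁻¹) ∞ = ξ := by
    rw [← hσξ, ← mob_mul, inv_mul_cancel, Matrix.SpecialLinearGroup.coe_one, mob_one]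
  have hinj : Function.Injective (mob (↑σ⁻¹)) := mob_injective _
  have main1 : ∀ γ : SL2, IsParabolic γ → mob (↑γ) ξ = ξ → mob (↑γ) '' C ≠ C →
      Function.Injective (fun k : ℤ => mob (↑(γ ^ k)) '' C) ∧
      ∀ k l : ℤ, k ≠ l →
        (mob (↑(γ ^ k)) '' C) ∩ (mob (↑(γ ^ l)) '' C) = {ξ} := by
    intro γ hpar hfix hne
    set δ := σ * γ * σ⁻¹ with hδ
    have hmobδ : ∀ w, mob (↑δ) w = mob (↑σ) (mob (↑γ) (mob (↑σ⁻¹) w)) := by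
      intro w; rw [hδ, mob_mul, mob_mul]
    have hdinf : mob (↑δ) ∞ = ∞ := by rw [hmobδ, hσinv, hfix, hσξ]
    have hγuniq : ∀ w, mob (↑γ) w = w → w = ξ := by
      obtain ⟨w₁, hw₁, hu1⟩ := hpar
      intro w hw
      rw [hu1 w hw, ← hu1 ξ hfix]
    have hdpar : IsParabolic δ := by
      refine ⟨∞, hdinf, ?_⟩
      intro w hw
      rw [hmobδ] at hw
      have h1 : mob (↑γ) (mob (↑σ⁻¹) w) = mob (↑σ⁻¹) w := by
        have h2 := congrArg (mob (↑σ⁻¹)) hw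
        rw [← mob_mul, inv_mul_cancel, Matrix.SpecialLinearGroup.coe_one, mob_one] at h2
        exact h2
      have h3 := hγuniq _ h1
      have h4 := congrArg (mob (↑σ)) h3
      rw [hσξ, ← mob_mul, mul_inv_cancel, Matrix.SpecialLinearGroup.coe_one, mob_one] at h4
      exact h4
    obtain ⟨t, ht0, hTr⟩ := parabolic_fix_infty δ hdpar hdinf
    have himg : ∀ k : ℤ, mob (↑(γ ^ k)) '' C = mob (↑σ⁻¹) '' lineSet (v + (k : ℂ) * t) u := by
      intro k
      have hconj2 : δ ^ k = σ * γ ^ k * σ⁻¹ := by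
        rw [hδ]
        simpa [MulAut.conj_apply] using (map_zpow (MulAut.conj σ) γ k).symm
      have hconj : γ ^ k = σ⁻¹ * (δ ^ k * σ) := by
        rw [hconj2]
        simp [mul_assoc]
      rw [hconj, image_mul, image_mul, hCimg]
      congr 1
      rw [Set.image_congr' (mob_zpow_Tr δ t hTr k), Tr_image_line]
    have hnot : ¬∃ s : ℝ, (s : ℂ) * u = t := by
      rintro ⟨s, hs⟩
      apply hne
      have h1 := himg 1
      rw [zpow_one] at h1
      push_cast at h1
      have h2 : lineSet (v + 1 * t) u = lineSet v u := by rw [one_mul, ← hs, lineSet_shift]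
      rw [h1, h2, ← hCimg, ← image_mul, inv_mul_cancel]
      have hid : mob ((1 : SL2) : Matrix (Fin 2) (Fin 2) ℂ) = id := by
        funext w; rw [Matrix.SpecialLinearGroup.coe_one, mob_one, id]
      rw [hid, Set.image_id]
    have hkey : ∀ k l : ℤ, k ≠ l → ¬∃ s : ℝ, (s : ℂ) * u = ((k : ℂ) - (l : ℂ)) * t := by
      rintro k l hkl ⟨s, hs⟩
      apply hnot
      have hklR : ((k : ℝ) - (l : ℝ)) ≠ 0 :=
        sub_ne_zero.2 (fun h => hkl (by exact_mod_cast h))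
      have hcast : (((k : ℝ) - (l : ℝ) : ℝ) : ℂ) = (k : ℂ) - (l : ℂ) := by push_cast; ring
      have hklC : (k : ℂ) - (l : ℂ) ≠ 0 := by
        rw [← hcast]
        exact_mod_cast Complex.ofReal_ne_zero.2 hklR
      refine ⟨s / ((k : ℝ) - (l : ℝ)), ?_⟩
      rw [Complex.ofReal_div, hcast, div_mul_eq_mul_div, div_eq_iff hklC]
      linear_combination hs
    refine ⟨?_, ?_⟩
    · intro k l h
      simp only at h
      by_contra hkl
      rw [himg k, himg l] at h
      have h2 := Set.image_injective.2 hinj h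
      have hmem : ((v + (k : ℂ) * t : ℂ) : OnePoint ℂ) ∈ lineSet (v + (k : ℂ) * t) u :=
        (coe_mem_lineSet _ _ _).2 ⟨0, by simp⟩
      rw [h2] at hmem
      have hrw : lineSet (v + (l : ℂ) * t) u
          = lineSet ((v + (k : ℂ) * t) + ((l : ℂ) - (k : ℂ)) * t) u := by congr 1; ring
      rw [hrw] at hmem
      exact coe_notMem_lineSet_shift _ u _ (hkey l k (Ne.symm hkl)) hmem
    · intro k l hkl
      rw [himg k, himg l, ← Set.image_inter hinj]
      have hrw : lineSet (v + (k : ℂ) * t) u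
          = lineSet ((v + (l : ℂ) * t) + ((k : ℂ) - (l : ℂ)) * t) u := by congr 1; ring
      rw [hrw, lineSet_inter _ u _ (hkey k l hkl), Set.image_singleton, hσinv]
  refine ⟨main1, ?_⟩
  intro Γ hno γ hγΓ hpar hfix
  by_contra hne
  obtain ⟨hinj1, hint⟩ := main1 γ hpar hfix hne
  exact hno ⟨fun k => mob (↑(γ ^ k)) '' C, hinj1,
    fun k => ⟨γ ^ k, zpow_mem hγΓ k, rfl⟩, hint⟩

end
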